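/- arXiv:2501.12500 — 4 statements merged into one kernel-verified Lean document; each statement's English description precedes it below -/
import Mathlib

section
/- Let M be an n×n real matrix that is lower triangular with all diagonal entries non-zero. If P and Q are n×n permutation matrices such that P M Q has all diagonal entries non-zero, then P M Q being diagonal-nonzero under simultaneous row and column permutations forces the permutations to be equal: if the matrix obtained by permuting the rows of M by a permutation σ and the columns by a permutation τ has all diagonal entries non-zero, then σ = τ. -/
/-- Lemma 1 of LiNGAM (Shimizu et al. 2006): if `M` is lower triangular with
nonzero diagonal and simultaneously permuting rows by `σ` and columns by `τ`
yields a matrix with nonzero diagonal, then `σ = τ`. -/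
theorem lingam_lemma1 {n : ℕ} (M : Matrix (Fin n) (Fin n) ℝ)
    (hlow : ∀ i j : Fin n, i < j → M i j = 0)
    (hdiag : ∀ i : Fin n, M i i ≠ 0)
    (σ τ : Equiv.Perm (Fin n))
    (hperm : ∀ i : Fin n, M (σ i) (τ i) ≠ 0) :
    σ = τ := by
  have h1 : ∀ i, (τ i : ℕ) ≤ (σ i : ℕ) := by
    intro i
    by_contra h
    push_neg at h
    exact hperm i (hlow _ _ h)
  have hsum : ∑ i : Fin n, (τ i : ℕ) = ∑ i : Fin n, (σ i : ℕ) := by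
    rw [Equiv.sum_comp τ (fun x : Fin n => (x : ℕ)),
        Equiv.sum_comp σ (fun x : Fin n => (x : ℕ))]
  have := (Finset.sum_eq_sum_iff_of_le (fun i _ => h1 i)).mp hsum
  ext i
  exact ((this i (Finset.mem_univ i)) : (τ i : ℕ) = (σ i : ℕ)) ▸ rfl
end

section
/- Composition of injective bounded linear operators is injective, and consequently, if L₁ = L₂ ∘ D ∘ L₂^{-1} ∘ L₃ with L₂ injective with densely defined inverse, L₃ injective, and D injective, then L₁ is injective; moreover from the operator equation L_{x_t; x_{t+1}|x_{t−1}} = L_{x_{t+1}|z_t} ∘ D_{x_t|z_t} ∘ L_{z_t|x_{t−1}} with L_{x_{t+1}|z_t} injective, one can solve uniquely L_{z_t|x_{t−1}} = L_{x_{t+1}|z_t}^{-1} ∘ L_{x_{t+1}|x_{t−1}}. -/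
/-- Operator-algebra step of Theorem "blk idn": with bounded linear operators
`L₂ : E →L F` injective, `D : E →L E` injective, and `L₃ : G →L F` injective,
if `Lz : G →L E` satisfies `L₂ ∘ Lz = L₃` (so `Lz = L₂⁻¹ ∘ L₃`) and
`L₁ = L₂ ∘ D ∘ Lz`, then `L₁` is injective, and `Lz` is the unique solution of
`L₂ ∘ Lz = L₃`. -/
theorem operator_composition_injective
    {E F G : Type*}
    [NormedAddCommGroup E] [NormedSpace ℝ E]
    [NormedAddCommGroup F] [NormedSpace ℝ F]
    [NormedAddCommGroup G] [NormedSpace ℝ G]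
    (L₂ : E →L[ℝ] F) (D : E →L[ℝ] E) (L₃ : G →L[ℝ] F) (Lz : G →L[ℝ] E)
    (hL₂ : Function.Injective L₂)
    (hD : Function.Injective D)
    (hL₃ : Function.Injective L₃)
    (hfac : L₂.comp Lz = L₃)
    (L₁ : G →L[ℝ] F)
    (hL₁ : L₁ = L₂.comp (D.comp Lz)) :
    Function.Injective L₁ ∧
      ∀ Lz' : G →L[ℝ] E, L₂.comp Lz' = L₃ → Lz' = Lz := by
  have hLz : Function.Injective Lz := by
    intro a b hab
    apply hL₃
    rw [← hfac]
    simp [hab]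
  constructor
  · intro a b hab
    rw [hL₁] at hab
    exact hLz (hD (hL₂ hab))
  · intro Lz' h
    ext x
    apply hL₂
    have := congrArg (fun T : G →L[ℝ] F => T x) (h.trans hfac.symm)
    simpa using this
end

section
/- Let J_m, J_m^L, D_m, D_m^L be n×n real matrices and P a permutation matrix, with J_m^L invertible lower triangular, D_m^L = diag(J_m^L) invertible, D_m invertible diagonal, and J_m = P J_m^L (D_m^L)^{-1} Pᵀ D_m. If J_ĝ = J_m J_h^{-1} where J_h is a monomial matrix J_h = QΛ (Q permutation, Λ invertible diagonal) such that P (D_m^L)^{-1} Pᵀ D_m J_h = I, then J_h is diagonal (Q = I) and consequently supp(J_ĝ) = supp(J_m). -/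
open Matrix

/-- The permutation matrix of a permutation `σ` of `Fin n`. -/
def permMat {n : ℕ} (σ : Equiv.Perm (Fin n)) : Matrix (Fin n) (Fin n) ℝ :=
  Matrix.of fun i j => if σ j = i then 1 else 0

lemma permMat_mul {n : ℕ} (σ : Equiv.Perm (Fin n)) (M : Matrix (Fin n) (Fin n) ℝ) :
    permMat σ * M = M.submatrix (⇑σ⁻¹) id := by
  ext i j
  simp only [mul_apply, permMat, of_apply, submatrix_apply, id]
  rw [Finset.sum_eq_single (σ⁻¹ i)]
  · simp
  · intro b _ hb
    rw [if_neg, zero_mul]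
    intro h
    exact hb (by rw [← h]; simp)
  · simp

lemma mul_permMatT {n : ℕ} (σ : Equiv.Perm (Fin n)) (M : Matrix (Fin n) (Fin n) ℝ) :
    M * (permMat σ)ᵀ = M.submatrix id (⇑σ⁻¹) := by
  ext i j
  simp only [mul_apply, transpose_apply, permMat, of_apply, submatrix_apply, id]
  rw [Finset.sum_eq_single (σ⁻¹ j)]
  · simp
  · intro b _ hb
    rw [if_neg, mul_zero]
    intro h
    exact hb (by rw [← h]; simp)
  · simp

lemma permMat_conj_diagonal {n : ℕ} (σ : Equiv.Perm (Fin n)) (d : Fin n → ℝ) :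
    permMat σ * Matrix.diagonal d * (permMat σ)ᵀ
      = Matrix.diagonal (fun i => d (σ⁻¹ i)) := by
  rw [permMat_mul, mul_permMatT]
  ext i j
  by_cases h : i = j
  · subst h; simp [diagonal_apply_eq]
  · have h2 : σ⁻¹ i ≠ σ⁻¹ j := fun hc => h (σ⁻¹.injective hc)
    simp only [submatrix_apply, id_eq]
    rw [diagonal_apply_ne _ h2, diagonal_apply_ne _ h]

lemma permMat_refl {n : ℕ} : permMat (Equiv.refl (Fin n)) = 1 := by
  ext i j
  simp [permMat, one_apply, eq_comm]

/-- Permutation-elimination step of Theorem "ident B": with `J_m^L` invertible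
lower triangular, `D_m^L = diag(J_m^L)`, `D_m` invertible diagonal, `P` the
permutation matrix of `σ`, `J_m = P J_m^L (D_m^L)⁻¹ Pᵀ D_m`, and a monomial
residual indeterminacy `J_h = Q Λ` with `P (D_m^L)⁻¹ Pᵀ D_m J_h = I`, the
permutation `Q` must be the identity, and consequently
`J_ĝ = J_m J_h⁻¹` has the same support as `J_m`. -/
theorem permutation_elimination {n : ℕ}
    (JmL : Matrix (Fin n) (Fin n) ℝ)
    (hJmL_low : ∀ i j : Fin n, i < j → JmL i j = 0)
    (hJmL_diag : ∀ i : Fin n, JmL i i ≠ 0)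
    (hJmL_inv : IsUnit JmL)
    (DmL : Matrix (Fin n) (Fin n) ℝ)
    (hDmL : DmL = Matrix.diagonal (fun i => JmL i i))
    (dm : Fin n → ℝ) (hdm : ∀ i, dm i ≠ 0)
    (σ τ : Equiv.Perm (Fin n)) (lam : Fin n → ℝ) (hlam : ∀ i, lam i ≠ 0)
    (Jm Jh Jg : Matrix (Fin n) (Fin n) ℝ)
    (hJm : Jm = permMat σ * JmL * DmL⁻¹ * (permMat σ)ᵀ * Matrix.diagonal dm)
    (hJh : Jh = permMat τ * Matrix.diagonal lam)
    (hunit : permMat σ * DmL⁻¹ * (permMat σ)ᵀ * Matrix.diagonal dm * Jh = 1)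
    (hJg : Jg = Jm * Jh⁻¹) :
    τ = Equiv.refl (Fin n) ∧
      ∀ i j : Fin n, Jg i j ≠ 0 ↔ Jm i j ≠ 0 := by
  -- DmL⁻¹ is the diagonal matrix of inverses
  have hDinv : DmL⁻¹ = Matrix.diagonal (fun i => (JmL i i)⁻¹) := by
    rw [hDmL]
    apply Matrix.inv_eq_right_inv
    rw [Matrix.diagonal_mul_diagonal]
    have : (fun i => JmL i i * (JmL i i)⁻¹) = fun _ => (1 : ℝ) :=
      funext fun i => mul_inv_cancel₀ (hJmL_diag i)
    rw [this, Matrix.diagonal_one]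
  -- rewrite hunit into a fully explicit form
  have hU : Matrix.diagonal (fun i => (JmL (σ⁻¹ i) (σ⁻¹ i))⁻¹) * Matrix.diagonal dm *
      (permMat τ * Matrix.diagonal lam) = 1 := by
    rw [← hJh, ← hunit, hDinv, permMat_conj_diagonal]
  have htau : ∀ j, τ j = j := by
    intro j
    by_contra h
    have h1 : (Matrix.diagonal (fun i => (JmL (σ⁻¹ i) (σ⁻¹ i))⁻¹) * Matrix.diagonal dm *
        (permMat τ * Matrix.diagonal lam)) (τ j) j = (1 : Matrix (Fin n) (Fin n) ℝ) (τ j) j := by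
      rw [hU]
    rw [Matrix.diagonal_mul_diagonal, ← mul_assoc, Matrix.mul_diagonal,
      Matrix.diagonal_mul, Matrix.one_apply_ne h] at h1
    have : permMat τ (τ j) j = 1 := by simp [permMat]
    rw [this] at h1
    exact (mul_ne_zero (mul_ne_zero
      (mul_ne_zero (inv_ne_zero (hJmL_diag _)) (hdm _)) one_ne_zero) (hlam j)) h1
  have htau' : τ = Equiv.refl (Fin n) := Equiv.ext htau
  refine ⟨htau', fun i j => ?_⟩
  have hJh' : Jh = Matrix.diagonal lam := by
    rw [hJh, htau', permMat_refl, one_mul]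
  have hJhinv : Jh⁻¹ = Matrix.diagonal (fun i => (lam i)⁻¹) := by
    rw [hJh']
    apply Matrix.inv_eq_right_inv
    rw [Matrix.diagonal_mul_diagonal]
    have : (fun i => lam i * (lam i)⁻¹) = fun _ => (1 : ℝ) :=
      funext fun i => mul_inv_cancel₀ (hlam i)
    rw [this, Matrix.diagonal_one]
  have : Jg i j = Jm i j * (lam j)⁻¹ := by
    rw [hJg, hJhinv, Matrix.mul_diagonal]
  rw [this]
  constructor
  · intro h hc; exact h (by rw [hc, zero_mul])
  · intro h; exact mul_ne_zero h (inv_ne_zero (hlam j))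
end

section
/- Let A be an n×n matrix with non-negative entries and define h(A) = tr[(I + (1/n) A)ⁿ] − n. Then h(A) ≥ 0, and h(A) = 0 if and only if the directed graph with edge j → i whenever A_{ij} > 0 is acyclic (equivalently, tr(A^k) = 0 for all 1 ≤ k ≤ n). -/
open Matrix Finset

lemma pow_entry_nonneg {n : ℕ} (A : Matrix (Fin n) (Fin n) ℝ)
    (hA : ∀ i j, 0 ≤ A i j) (k : ℕ) : ∀ i j, 0 ≤ (A ^ k) i j := by
  induction k with
  | zero => intro i j; simp [Matrix.one_apply]; positivity
  | succ k ih =>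
    intro i j
    rw [pow_succ, Matrix.mul_apply]
    exact Finset.sum_nonneg fun x _ => mul_nonneg (ih i x) (hA x j)

lemma trace_pow_nonneg {n : ℕ} (A : Matrix (Fin n) (Fin n) ℝ)
    (hA : ∀ i j, 0 ≤ A i j) (k : ℕ) : 0 ≤ Matrix.trace (A ^ k) :=
  Finset.sum_nonneg fun i _ => pow_entry_nonneg A hA k i i

lemma walk_pos {n : ℕ} (A : Matrix (Fin n) (Fin n) ℝ)
    (hA : ∀ i j, 0 ≤ A i j) (k : ℕ) (c : ℕ → Fin n)
    (hc : ∀ l < k, 0 < A (c (l + 1)) (c l)) : 0 < (A ^ k) (c k) (c 0) := by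
  induction k with
  | zero => simp [Matrix.one_apply]
  | succ k ih =>
    rw [pow_succ', Matrix.mul_apply]
    apply Finset.sum_pos' (fun x _ => mul_nonneg (hA _ x) (pow_entry_nonneg A hA k x _))
    refine ⟨c k, Finset.mem_univ _, ?_⟩
    exact mul_pos (hc k (Nat.lt_succ_self k)) (ih fun l hl => hc l (hl.trans (Nat.lt_succ_self k)))

lemma entry_pos_walk {n : ℕ} (A : Matrix (Fin n) (Fin n) ℝ)
    (hA : ∀ i j, 0 ≤ A i j) (k : ℕ) :
    ∀ i j, 0 < (A ^ k) i j →
      ∃ c : ℕ → Fin n, c 0 = j ∧ c k = i ∧ ∀ l < k, 0 < A (c (l + 1)) (c l) := by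
  induction k with
  | zero =>
    intro i j hpos
    have hij : i = j := by
      by_contra hij
      simp [Matrix.one_apply, hij] at hpos
    exact ⟨fun _ => j, rfl, hij.symm, by omega⟩
  | succ k ih =>
    intro i j hpos
    rw [pow_succ', Matrix.mul_apply] at hpos
    obtain ⟨x, -, hx⟩ := Finset.exists_lt_of_sum_lt (f := fun _ => (0:ℝ))
      (by simpa using hpos)
    have hx1 : 0 < A i x := by
      by_contra hcon
      have : A i x = 0 := le_antisymm (not_lt.mp hcon) (hA i x)
      simp [this] at hx
    have hx2 : 0 < (A ^ k) x j := by
      by_contra hcon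
      have : (A ^ k) x j = 0 := le_antisymm (not_lt.mp hcon) (pow_entry_nonneg A hA k x j)
      simp [this] at hx
    obtain ⟨d, hd0, hdk, hde⟩ := ih x j hx2
    refine ⟨fun l => if l = k + 1 then i else d l, by simp [hd0], by simp, ?_⟩
    intro l hl
    rcases Nat.lt_succ_iff_lt_or_eq.mp hl with hl' | rfl
    · have h1 : l + 1 ≠ k + 1 := by omega
      have h2 : l ≠ k + 1 := by omega
      simpa [h1, h2, show l ≠ k by omega] using hde l hl'
    · have h2 : l ≠ l + 1 := by omega
      simpa [h2, hdk] using hx1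

lemma cycle_trace_pos {n : ℕ} (A : Matrix (Fin n) (Fin n) ℝ)
    (hA : ∀ i j, 0 ≤ A i j)
    (hc : ∃ (k : ℕ) (c : ℕ → Fin n), 0 < k ∧ c k = c 0 ∧
        ∀ l < k, 0 < A (c (l + 1)) (c l)) :
    ∃ m, 1 ≤ m ∧ m ≤ n ∧ 0 < Matrix.trace (A ^ m) := by
  obtain ⟨k, c, hk, hck, he⟩ := hc
  -- extract a cycle of length ≤ n
  obtain ⟨m, d, hm1, hmn, hdm, hde⟩ :
      ∃ (m : ℕ) (d : ℕ → Fin n), 1 ≤ m ∧ m ≤ n ∧ d m = d 0 ∧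
        ∀ l < m, 0 < A (d (l + 1)) (d l) := by
    rcases le_or_gt k n with hkn | hnk
    · exact ⟨k, c, hk, hkn, hck, he⟩
    · have hcard : Fintype.card (Fin n) < Fintype.card (Fin (n + 1)) := by simp
      obtain ⟨a, b, hab, heq⟩ := Fintype.exists_ne_map_eq_of_card_lt
        (fun a : Fin (n + 1) => c a) hcard
      wlog hlt : (a : ℕ) < (b : ℕ) generalizing a b
      · exact this b a hab.symm heq.symm (by omega)
      have ha : (a : ℕ) ≤ n := by omega
      have hb : (b : ℕ) ≤ n := by omega
      refine ⟨(b : ℕ) - (a : ℕ), fun l => c ((a : ℕ) + l), by omega, by omega, ?_, ?_⟩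
      · simp only [Nat.add_sub_cancel' hlt.le, add_zero]
        exact heq.symm
      · intro l hl
        have hlk : (a : ℕ) + l < k := by omega
        have := he ((a : ℕ) + l) hlk
        rwa [Nat.add_assoc] at this
  refine ⟨m, hm1, hmn, ?_⟩
  have hpos : 0 < (A ^ m) (d 0) (d 0) := by
    have := walk_pos A hA m d hde
    rwa [hdm] at this
  exact Finset.sum_pos' (fun i _ => pow_entry_nonneg A hA m i i)
    ⟨d 0, Finset.mem_univ _, hpos⟩

lemma Q_iff_T {n : ℕ} (A : Matrix (Fin n) (Fin n) ℝ)
    (hA : ∀ i j, 0 ≤ A i j) :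
    (¬ ∃ (k : ℕ) (c : ℕ → Fin n), 0 < k ∧ c k = c 0 ∧
        ∀ l < k, 0 < A (c (l + 1)) (c l)) ↔
      ∀ k : ℕ, 1 ≤ k → k ≤ n → Matrix.trace (A ^ k) = 0 := by
  constructor
  · intro hQ k hk1 hkn
    by_contra htr
    have hpos : 0 < Matrix.trace (A ^ k) :=
      lt_of_le_of_ne (Finset.sum_nonneg fun i _ => pow_entry_nonneg A hA k i i) (Ne.symm htr)
    obtain ⟨i, -, hi⟩ := Finset.exists_lt_of_sum_lt (f := fun _ : Fin n => (0:ℝ))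
      (by simpa [Matrix.trace] using hpos)
    obtain ⟨c, hc0, hck, hce⟩ := entry_pos_walk A hA k i i hi
    exact hQ ⟨k, c, hk1, by rw [hck, hc0], hce⟩
  · intro hT hcyc
    obtain ⟨m, hm1, hmn, hpos⟩ := cycle_trace_pos A hA hcyc
    rw [hT m hm1 hmn] at hpos
    exact lt_irrefl 0 hpos

lemma trace_binom {n : ℕ} (A : Matrix (Fin n) (Fin n) ℝ) (c : ℝ) :
    Matrix.trace ((1 + c • A) ^ n) =
      ∑ k ∈ Finset.range (n + 1), (n.choose k : ℝ) * c ^ k * Matrix.trace (A ^ k) := by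
  rw [add_comm, (Commute.one_right (c • A)).add_pow, Matrix.trace_sum]
  refine Finset.sum_congr rfl fun k hk => ?_
  rw [one_pow, mul_one, smul_pow]
  rw [show ((n.choose k : ℕ) : Matrix (Fin n) (Fin n) ℝ) = (n.choose k : ℝ) • 1 by
    simp [Nat.cast_smul_eq_nsmul]]
  rw [Matrix.mul_smul, Matrix.mul_one, Matrix.trace_smul, Matrix.trace_smul]
  ring_nf

/-- DAG-ness characterization underlying the acyclicity penalty of Yu et al.
(2019): for a nonnegative matrix `A`, `h(A) = tr[(I + (1/n)A)ⁿ] − n` is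
nonnegative, and vanishes iff the directed graph with an edge `j → i` whenever
`A_{ij} > 0` is acyclic, which holds iff `tr(A^k) = 0` for all `1 ≤ k ≤ n`. -/
theorem dag_trace_characterization {n : ℕ}
    (A : Matrix (Fin n) (Fin n) ℝ)
    (hA : ∀ i j : Fin n, 0 ≤ A i j)
    (h : ℝ)
    (hdef : h = Matrix.trace ((1 + ((n : ℝ)⁻¹) • A) ^ n) - n) :
    0 ≤ h ∧
    (h = 0 ↔
      ¬ ∃ (k : ℕ) (c : ℕ → Fin n), 0 < k ∧ c k = c 0 ∧
        ∀ l < k, 0 < A (c (l + 1)) (c l)) ∧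
    ((¬ ∃ (k : ℕ) (c : ℕ → Fin n), 0 < k ∧ c k = c 0 ∧
        ∀ l < k, 0 < A (c (l + 1)) (c l)) ↔
      ∀ k : ℕ, 1 ≤ k → k ≤ n → Matrix.trace (A ^ k) = 0) := by
  have hQT := Q_iff_T A hA
  rcases Nat.eq_zero_or_pos n with rfl | hn
  · have h0 : h = 0 := by
      simp [hdef, Matrix.trace]
    refine ⟨h0.ge, ?_, hQT⟩
    rw [h0]
    simp only [true_iff]
    rintro ⟨k, c, -⟩
    exact Fin.elim0 (c 0)
  -- n ≥ 1
  have hc : (0 : ℝ) < (n : ℝ)⁻¹ := by positivity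
  have hsum : h = ∑ i ∈ Finset.range n,
      (n.choose (i + 1) : ℝ) * ((n : ℝ)⁻¹) ^ (i + 1) * Matrix.trace (A ^ (i + 1)) := by
    rw [hdef, trace_binom, Finset.sum_range_succ']
    simp [Matrix.trace_one]
  have hterm : ∀ i ∈ Finset.range n, 0 ≤
      (n.choose (i + 1) : ℝ) * ((n : ℝ)⁻¹) ^ (i + 1) * Matrix.trace (A ^ (i + 1)) := by
    intro i _
    have := trace_pow_nonneg A hA (i + 1)
    positivity
  have hT : h = 0 ↔ ∀ k : ℕ, 1 ≤ k → k ≤ n → Matrix.trace (A ^ k) = 0 := by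
    rw [hsum, Finset.sum_eq_zero_iff_of_nonneg hterm]
    constructor
    · intro hall k hk1 hkn
      have := hall (k - 1) (by simp; omega)
      rw [show k - 1 + 1 = k by omega] at this
      have hch : (0 : ℝ) < (n.choose k : ℝ) := by
        exact_mod_cast Nat.choose_pos hkn
      have hcp : (0 : ℝ) < ((n : ℝ)⁻¹) ^ k := by positivity
      have := mul_eq_zero.mp this
      rcases this with h1 | h2
      · have hposm : (0:ℝ) < (n.choose k : ℝ) * ((n : ℝ)⁻¹) ^ k := by positivity
        exact absurd h1 hposm.ne'
      · exact h2
    · intro hall i hi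
      simp only [Finset.mem_range] at hi
      rw [hall (i + 1) (by omega) (by omega)]
      ring
  refine ⟨?_, hT.trans hQT.symm, hQT⟩
  rw [hsum]
  exact Finset.sum_nonneg hterm
end
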